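/- Let V be a Z/2-graded vector space with nondegenerate even graded-symmetric inner product, and let φ ∈ Hom(V^{⊗k},V), ψ ∈ Hom(V^{⊗l},V) both be cyclic with respect to the inner product. Then the Gerstenhaber bracket [φ,ψ] ∈ Hom(V^{⊗(k+l-1)},V) (the commutator of the corresponding coderivations of T(V)) is also cyclic. -/

import Mathlib

/-- `(-1)^a` for `a : ZMod 2`. -/
def pSign (k : Type*) [CommRing k] (a : ZMod 2) : k := (-1 : k) ^ a.val

section helpers

variable {k : Type*} [CommRing k]

lemma zmod2_cases (a : ZMod 2) : a = 0 ∨ a = 1 := by revert a; decide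

lemma pSign_add (a b : ZMod 2) : pSign k (a + b) = pSign k a * pSign k b := by
  rcases zmod2_cases a with rfl|rfl <;> rcases zmod2_cases b with rfl|rfl <;>
    simp [pSign, show ((1+1:ZMod 2)).val = 0 from rfl, show ((0:ZMod 2)).val = 0 from rfl,
      show ((1:ZMod 2)).val = 1 from rfl, show ((1+0:ZMod 2)).val = 1 from rfl,
      show ((0+1:ZMod 2)).val = 1 from rfl]

lemma pSign_self_mul (a : ZMod 2) : pSign k a * pSign k a = 1 := by
  rcases zmod2_cases a with rfl|rfl <;>
    simp [pSign, show ((0:ZMod 2)).val = 0 from rfl, show ((1:ZMod 2)).val = 1 from rfl]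

lemma pSign_zero : pSign k (0 : ZMod 2) = 1 := by
  simp [pSign, show ((0:ZMod 2)).val = 0 from rfl]

lemma pSign_one' : pSign k (1 : ZMod 2) = -1 := by
  simp [pSign, show ((1:ZMod 2)).val = 1 from rfl]

lemma pSign_congr (a b : ZMod 2) (h : a = b) : pSign k a = pSign k b := by rw [h]

def pad {α : Type*} [Zero α] {n : ℕ} (f : Fin n → α) : ℕ → α :=
  fun m => if h : m < n then f ⟨m, h⟩ else 0

lemma pad_mk {α : Type*} [Zero α] {n m : ℕ} (f : Fin n → α) (h : m < n) :
    f ⟨m, h⟩ = pad f m := by simp [pad, h]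

lemma pad_castSucc {α : Type*} [Zero α] {n : ℕ} (f : Fin (n+1) → α) (j : Fin n) :
    f j.castSucc = pad f (j : ℕ) := pad_mk f (by omega)

lemma pad_succ {α : Type*} [Zero α] {n : ℕ} (f : Fin (n+1) → α) (j : Fin n) :
    f j.succ = pad f ((j : ℕ) + 1) := pad_mk f (by omega)

lemma pad_zero {α : Type*} [Zero α] {n : ℕ} (f : Fin (n+1) → α) :
    f 0 = pad f 0 := by
  have h : (0 : Fin (n+1)) = ⟨0, by omega⟩ := by ext; simp
  rw [h]; exact pad_mk f (by omega)

lemma pad_last {α : Type*} [Zero α] {n : ℕ} (f : Fin (n+1) → α) :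
    f (Fin.last n) = pad f n := pad_mk f (by omega)

lemma sum_ite_lt {M : Type*} [AddCommMonoid M] (N c : ℕ) (hc : c ≤ N) (q : ℕ → M) :
    (∑ j : Fin N, if (j : ℕ) < c then q (j : ℕ) else 0) = ∑ j ∈ Finset.range c, q j := by
  rw [Fin.sum_univ_eq_sum_range (fun j => if j < c then q j else 0), ← Finset.sum_filter]
  congr 1
  ext j
  simp only [Finset.mem_filter, Finset.mem_range]
  omega

end helpers


/-- The composition `φ ∘ ψ_{LK}` of `φ : V^{⊗K} → V` with the restriction of the
coderivation extension of `ψ : V^{⊗L} → V` (of parity `pψ`) to `V^{⊗(K+L-1)}`,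
with `ZMod 2 × ℤ`-graded signs `(-1)^{(|v₁|+⋯+|v_i|)|ψ| + i(L-1)}`; `p` records the
parities of the homogeneous arguments `v`. -/
def insertComp (k : Type*) [Field k] {V : Type*} [AddCommGroup V] [Module k V]
    (K L : ℕ) (hK : 1 ≤ K) (hL : 1 ≤ L)
    (φ : (Fin K → V) → V) (ψ : (Fin L → V) → V) (pψ : ZMod 2)
    (p : Fin (K + L - 1) → ZMod 2) (v : Fin (K + L - 1) → V) : V :=
  ∑ i : Fin K,
    pSign k ((∑ j : Fin (K + L - 1), if (j : ℕ) < (i : ℕ) then p j else 0) * pψ +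
        (((i : ℕ) * (L - 1) : ℕ) : ZMod 2)) •
      φ (fun j : Fin K =>
        if h1 : (j : ℕ) < (i : ℕ) then
          v ⟨(j : ℕ), by have := j.2; have := i.2; omega⟩
        else if h2 : (j : ℕ) = (i : ℕ) then
          ψ (fun t : Fin L => v ⟨(i : ℕ) + (t : ℕ), by have := t.2; have := i.2; omega⟩)
        else v ⟨(j : ℕ) + L - 1, by have := j.2; omega⟩)

/-- The Gerstenhaber bracket `[φ,ψ] = φ∘ψ_{LK} - (-1)^{⟨φ,ψ⟩} ψ∘φ_{KL}` of
`φ : V^{⊗K} → V` and `ψ : V^{⊗L} → V`, on homogeneous arguments of parities `p`,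
with the `ZMod 2 × ℤ`-graded sign `⟨φ,ψ⟩ = |φ||ψ| + (K-1)(L-1)`. -/
def gerstBracket (k : Type*) [Field k] {V : Type*} [AddCommGroup V] [Module k V]
    (K L : ℕ) (hK : 1 ≤ K) (hL : 1 ≤ L)
    (φ : (Fin K → V) → V) (ψ : (Fin L → V) → V) (pφ pψ : ZMod 2)
    (p : Fin (K + L - 1) → ZMod 2) (v : Fin (K + L - 1) → V) : V :=
  insertComp k K L hK hL φ ψ pψ p v
    - pSign k (pφ * pψ + (((K - 1) * (L - 1) : ℕ) : ZMod 2)) •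
      insertComp k L K hL hK ψ φ pφ
        (fun j => p ⟨(j : ℕ), by have := j.2; omega⟩)
        (fun j => v ⟨(j : ℕ), by have := j.2; omega⟩)

set_option maxRecDepth 100000

/-- Lemma 4: if `φ` and `ψ` are cyclic with respect to a
nondegenerate even graded-symmetric inner product, then so is their Gerstenhaber
bracket `[φ,ψ]` (which has parity `|φ| + |ψ|`). -/
theorem gerstenhaber_bracket_of_cyclic_is_cyclic {k V : Type*} [Field k]
    [AddCommGroup V] [Module k V]
    (𝒱 : ZMod 2 → Submodule k V)
    (ip : V →ₗ[k] V →ₗ[k] k)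
    (hsymm : ∀ i j : ZMod 2, ∀ v ∈ 𝒱 i, ∀ w ∈ 𝒱 j, ip v w = pSign k (i * j) * ip w v)
    (heven : ∀ i j : ZMod 2, i ≠ j → ∀ v ∈ 𝒱 i, ∀ w ∈ 𝒱 j, ip v w = 0)
    (hnd : ∀ v : V, (∀ w : V, ip v w = 0) → v = 0)
    (K L : ℕ) (hK : 1 ≤ K) (hL : 1 ≤ L)
    (φ : (Fin K → V) → V) (ψ : (Fin L → V) → V) (pφ pψ : ZMod 2)
    (hφ : ∀ (u : Fin K → V) (q : Fin K → ZMod 2), (∀ i, u i ∈ 𝒱 (q i)) →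
      φ u ∈ 𝒱 ((∑ i, q i) + pφ))
    (hψ : ∀ (u : Fin L → V) (q : Fin L → ZMod 2), (∀ i, u i ∈ 𝒱 (q i)) →
      ψ u ∈ 𝒱 ((∑ i, q i) + pψ))
    (hφcyc : ∀ (v : Fin (K + 1) → V) (p : Fin (K + 1) → ZMod 2),
      (∀ i, v i ∈ 𝒱 (p i)) →
      ip (φ (fun i : Fin K => v i.castSucc)) (v (Fin.last K))
        = pSign k ((K : ZMod 2) + p 0 * pφ) *
            ip (v 0) (φ (fun i : Fin K => v i.succ)))
    (hψcyc : ∀ (v : Fin (L + 1) → V) (p : Fin (L + 1) → ZMod 2),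
      (∀ i, v i ∈ 𝒱 (p i)) →
      ip (ψ (fun i : Fin L => v i.castSucc)) (v (Fin.last L))
        = pSign k ((L : ZMod 2) + p 0 * pψ) *
            ip (v 0) (ψ (fun i : Fin L => v i.succ))) :
    ∀ (v : Fin (K + L - 1 + 1) → V) (p : Fin (K + L - 1 + 1) → ZMod 2),
      (∀ i, v i ∈ 𝒱 (p i)) →
      ip (gerstBracket k K L hK hL φ ψ pφ pψ
            (fun i : Fin (K + L - 1) => p i.castSucc)
            (fun i : Fin (K + L - 1) => v i.castSucc))
          (v (Fin.last (K + L - 1)))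
        = pSign k (((K + L - 1 : ℕ) : ZMod 2) + p 0 * (pφ + pψ)) *
            ip (v 0)
              (gerstBracket k K L hK hL φ ψ pφ pψ
                (fun i : Fin (K + L - 1) => p i.succ)
                (fun i : Fin (K + L - 1) => v i.succ)) := by
  intro v p hv
  obtain ⟨K, rfl⟩ : ∃ m, K = m + 1 := ⟨K - 1, by omega⟩
  obtain ⟨L, rfl⟩ : ∃ m, L = m + 1 := ⟨L - 1, by omega⟩
  have hv1 : ∀ (m : ℕ) (h : m < K + 1 + (L + 1) - 1 + 1), v ⟨m, h⟩ = pad v m :=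
    fun m h => pad_mk v h
  have hp1 : ∀ (m : ℕ) (h : m < K + 1 + (L + 1) - 1 + 1), p ⟨m, h⟩ = pad p m :=
    fun m h => pad_mk p h
  simp only [gerstBracket, insertComp, map_sub, map_sum, map_smul, LinearMap.sub_apply,
    LinearMap.smul_apply, LinearMap.coe_sum, Finset.sum_apply, smul_eq_mul,
    Fin.castSucc_mk, Fin.succ_mk, dite_eq_ite, Nat.add_sub_cancel, hv1, hp1,
    pad_zero v, pad_zero p, pad_last v, pad_last p]
  simp only [Fin.coe_castSucc, Fin.val_succ, Fin.val_zero, Fin.val_last, Nat.add_succ_sub_one]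
  conv_lhs => rw [Fin.sum_univ_succ]; rw [Fin.sum_univ_succ]
  conv_rhs => rw [Fin.sum_univ_castSucc]; rw [Fin.sum_univ_castSucc]
  simp only [Fin.coe_castSucc, Fin.val_succ, Fin.val_zero, Fin.val_last, Nat.zero_mul,
    Nat.not_lt_zero, if_false, Nat.cast_zero, Fin.isValue]
  simp only [Finset.sum_const_zero, zero_mul, add_zero, Nat.zero_add, pSign_zero, one_mul,
    zero_add]
  have hv2 : ∀ m : ℕ, m < K + 1 + L + 1 → pad v m ∈ 𝒱 (pad p m) := by
    intro m h
    rw [← hv1 m (by omega), ← hp1 m (by omega)]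
    exact hv _
  have claim1 : ∀ x : Fin K,
      pSign k ((∑ x_1 : Fin (K + 1 + L), if (x_1:ℕ) < (x:ℕ) + 1 then pad p ↑x_1 else 0) * pψ +
            ((((x:ℕ) + 1) * L : ℕ) : ZMod 2)) *
          (ip (φ fun j => if (j:ℕ) < (x:ℕ) + 1 then pad v ↑j
              else if (j:ℕ) = (x:ℕ) + 1 then ψ fun t => pad v ((x:ℕ) + 1 + ↑t)
              else pad v (↑j + L)))
            (pad v (K + 1 + L)) =
        pSign k (((K + 1 + L : ℕ) : ZMod 2) + pad p 0 * (pφ + pψ)) *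
          (pSign k ((∑ x_1 : Fin (K + 1 + L), if (x_1:ℕ) < (x:ℕ) then pad p (↑x_1 + 1) else 0) * pψ +
                (((x:ℕ) * L : ℕ) : ZMod 2)) *
            (ip (pad v 0))
              (φ fun j => if (j:ℕ) < (x:ℕ) then pad v (↑j + 1)
                else if (j:ℕ) = (x:ℕ) then ψ fun t => pad v ((x:ℕ) + ↑t + 1)
                else pad v (↑j + L + 1))) := by
    intro x
    have hx := x.isLt
    set w : Fin (K + 1 + 1) → V := fun j => if (j:ℕ) < (x:ℕ) + 1 then pad v ↑j
        else if (j:ℕ) = (x:ℕ) + 1 then ψ (fun t : Fin (L+1) => pad v ((x:ℕ) + 1 + ↑t))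
        else pad v (↑j + L) with hwdef
    set q : Fin (K + 1 + 1) → ZMod 2 := fun j => if (j:ℕ) < (x:ℕ) + 1 then pad p ↑j
        else if (j:ℕ) = (x:ℕ) + 1 then (∑ t : Fin (L+1), pad p ((x:ℕ) + 1 + ↑t)) + pψ
        else pad p (↑j + L) with hqdef
    have hw : ∀ j, w j ∈ 𝒱 (q j) := by
      intro j
      have hj := j.isLt
      simp only [hwdef, hqdef]
      split_ifs with h1 h2
      · exact hv2 _ (by omega)
      · exact hψ _ _ (fun t => hv2 _ (by have := t.isLt; omega))
      · exact hv2 _ (by omega)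
    have hc := hφcyc w q hw
    have e1 : (fun i : Fin (K+1) => w i.castSucc) = (fun j : Fin (K+1) =>
        if (j:ℕ) < (x:ℕ) + 1 then pad v ↑j
        else if (j:ℕ) = (x:ℕ) + 1 then ψ (fun t => pad v ((x:ℕ) + 1 + ↑t))
        else pad v (↑j + L)) := by
      funext j; simp only [hwdef, Fin.coe_castSucc]
    have e2 : w (Fin.last (K+1)) = pad v (K + 1 + L) := by
      simp only [hwdef, Fin.val_last]
      rw [if_neg (by omega), if_neg (by omega)]
    have e3 : w 0 = pad v 0 := by
      simp only [hwdef, Fin.val_zero]; exact if_pos (by omega)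
    have e4 : q 0 = pad p 0 := by
      simp only [hqdef, Fin.val_zero]; exact if_pos (by omega)
    have e5 : (fun i : Fin (K+1) => w i.succ) = (fun j : Fin (K+1) =>
        if (j:ℕ) < (x:ℕ) then pad v (↑j + 1)
        else if (j:ℕ) = (x:ℕ) then ψ (fun t => pad v ((x:ℕ) + ↑t + 1))
        else pad v (↑j + L + 1)) := by
      funext j
      have hj := j.isLt
      simp only [hwdef, Fin.val_succ]
      split_ifs <;>
        first
          | rfl
          | omega
          | (congr 1 <;> omega)
          | (congr 1; funext t; congr 1; omega)
    rw [e1, e2, e3, e4, e5] at hc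
    rw [hc, ← mul_assoc, ← mul_assoc, ← pSign_add, ← pSign_add]
    congr 1
    apply pSign_congr
    have hS : (∑ x_1 : Fin (K + 1 + L), if (x_1:ℕ) < (x:ℕ) + 1 then pad p ↑x_1 else 0)
        = pad p 0 + ∑ x_1 : Fin (K+1+L), (if (x_1:ℕ) < (x:ℕ) then pad p (↑x_1 + 1) else 0) := by
      rw [sum_ite_lt _ _ (by omega) (fun m => pad p m),
        sum_ite_lt _ _ (by omega) (fun m => pad p (m+1)), Finset.sum_range_succ']
      ring
    rw [hS]
    push_cast
    ring
  have h2 : (2 : ZMod 2) = 0 := rfl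
  have claim3 : ∀ x : Fin L,
      pSign k ((∑ x_1 : Fin (L + 1 + K), if (x_1:ℕ) < (x:ℕ) + 1 then pad p ↑x_1 else 0) * pφ +
            ((((x:ℕ) + 1) * K : ℕ) : ZMod 2)) *
          (ip (ψ fun j => if (j:ℕ) < (x:ℕ) + 1 then pad v ↑j
              else if (j:ℕ) = (x:ℕ) + 1 then φ fun t => pad v ((x:ℕ) + 1 + ↑t)
              else pad v (↑j + K)))
            (pad v (K + 1 + L)) =
        pSign k (((K + 1 + L : ℕ) : ZMod 2) + pad p 0 * (pφ + pψ)) *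
          (pSign k ((∑ x_1 : Fin (L + 1 + K), if (x_1:ℕ) < (x:ℕ) then pad p (↑x_1 + 1) else 0) * pφ +
                (((x:ℕ) * K : ℕ) : ZMod 2)) *
            (ip (pad v 0))
              (ψ fun j => if (j:ℕ) < (x:ℕ) then pad v (↑j + 1)
                else if (j:ℕ) = (x:ℕ) then φ fun t => pad v ((x:ℕ) + ↑t + 1)
                else pad v (↑j + K + 1))) := by
    intro x
    have hx := x.isLt
    set w : Fin (L + 1 + 1) → V := fun j => if (j:ℕ) < (x:ℕ) + 1 then pad v ↑j
        else if (j:ℕ) = (x:ℕ) + 1 then φ (fun t : Fin (K+1) => pad v ((x:ℕ) + 1 + ↑t))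
        else pad v (↑j + K) with hwdef
    set q : Fin (L + 1 + 1) → ZMod 2 := fun j => if (j:ℕ) < (x:ℕ) + 1 then pad p ↑j
        else if (j:ℕ) = (x:ℕ) + 1 then (∑ t : Fin (K+1), pad p ((x:ℕ) + 1 + ↑t)) + pφ
        else pad p (↑j + K) with hqdef
    have hw : ∀ j, w j ∈ 𝒱 (q j) := by
      intro j
      have hj := j.isLt
      simp only [hwdef, hqdef]
      split_ifs with h1 h2
      · exact hv2 _ (by omega)
      · exact hφ _ _ (fun t => hv2 _ (by have := t.isLt; omega))
      · exact hv2 _ (by omega)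
    have hc := hψcyc w q hw
    have e1 : (fun i : Fin (L+1) => w i.castSucc) = (fun j : Fin (L+1) =>
        if (j:ℕ) < (x:ℕ) + 1 then pad v ↑j
        else if (j:ℕ) = (x:ℕ) + 1 then φ (fun t => pad v ((x:ℕ) + 1 + ↑t))
        else pad v (↑j + K)) := by
      funext j; simp only [hwdef, Fin.coe_castSucc]
    have e2 : w (Fin.last (L+1)) = pad v (K + 1 + L) := by
      simp only [hwdef, Fin.val_last]
      rw [if_neg (by omega), if_neg (by omega)]
      congr 1
      omega
    have e3 : w 0 = pad v 0 := by
      simp only [hwdef, Fin.val_zero]; exact if_pos (by omega)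
    have e4 : q 0 = pad p 0 := by
      simp only [hqdef, Fin.val_zero]; exact if_pos (by omega)
    have e5 : (fun i : Fin (L+1) => w i.succ) = (fun j : Fin (L+1) =>
        if (j:ℕ) < (x:ℕ) then pad v (↑j + 1)
        else if (j:ℕ) = (x:ℕ) then φ (fun t => pad v ((x:ℕ) + ↑t + 1))
        else pad v (↑j + K + 1)) := by
      funext j
      have hj := j.isLt
      simp only [hwdef, Fin.val_succ]
      split_ifs <;>
        first
          | rfl
          | omega
          | (congr 1 <;> omega)
          | (congr 1; funext t; congr 1; omega)
    rw [e1, e2, e3, e4, e5] at hc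
    rw [hc, ← mul_assoc, ← mul_assoc, ← pSign_add, ← pSign_add]
    congr 1
    apply pSign_congr
    have hS : (∑ x_1 : Fin (L + 1 + K), if (x_1:ℕ) < (x:ℕ) + 1 then pad p ↑x_1 else 0)
        = pad p 0 + ∑ x_1 : Fin (L+1+K), (if (x_1:ℕ) < (x:ℕ) then pad p (↑x_1 + 1) else 0) := by
      rw [sum_ite_lt _ _ (by omega) (fun m => pad p m),
        sum_ite_lt _ _ (by omega) (fun m => pad p (m+1)), Finset.sum_range_succ']
      ring
    rw [hS]
    push_cast
    ring
  have claim2 :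
      (ip (φ fun j => if (j:ℕ) = 0 then ψ fun t => pad v ↑t else pad v (↑j + L)))
          (pad v (K + 1 + L)) =
        -(pSign k (((K + 1 + L : ℕ) : ZMod 2) + pad p 0 * (pφ + pψ)) *
          (pSign k (pφ * pψ + ((K * L : ℕ) : ZMod 2)) *
            (pSign k ((∑ x : Fin (L + 1 + K), if (x:ℕ) < L then pad p (↑x + 1) else 0) * pφ +
                  ((L * K : ℕ) : ZMod 2)) *
              (ip (pad v 0))
                (ψ fun j => if (j:ℕ) < L then pad v (↑j + 1)
                  else if (j:ℕ) = L then φ fun t => pad v (L + ↑t + 1)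
                  else pad v (↑j + K + 1))))) := by
    set w : Fin (K + 1 + 1) → V := fun j => if (j:ℕ) = 0 then ψ (fun t : Fin (L+1) => pad v ↑t)
        else pad v (↑j + L) with hwdef
    set q : Fin (K + 1 + 1) → ZMod 2 := fun j => if (j:ℕ) = 0 then (∑ t : Fin (L+1), pad p ↑t) + pψ
        else pad p (↑j + L) with hqdef
    have hw : ∀ j, w j ∈ 𝒱 (q j) := by
      intro j
      have hj := j.isLt
      simp only [hwdef, hqdef]
      split_ifs
      · exact hψ _ _ (fun t => hv2 _ (by have := t.isLt; omega))
      · exact hv2 _ (by omega)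
    have hc := hφcyc w q hw
    have e1 : (fun i : Fin (K+1) => w i.castSucc) = (fun j : Fin (K+1) =>
        if (j:ℕ) = 0 then ψ (fun t => pad v ↑t) else pad v (↑j + L)) := by
      funext j; simp only [hwdef, Fin.coe_castSucc]
    have e2 : w (Fin.last (K+1)) = pad v (K + 1 + L) := by
      simp only [hwdef, Fin.val_last]; rw [if_neg (by omega)]
    have e3 : w 0 = ψ (fun t => pad v ↑t) := by
      simp [hwdef]
    have e4 : q 0 = (∑ t : Fin (L+1), pad p ↑t) + pψ := by
      simp [hqdef]
    have e5 : (fun i : Fin (K+1) => w i.succ) = (fun j : Fin (K+1) => pad v (↑j + 1 + L)) := by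
      funext j; simp only [hwdef, Fin.val_succ]; rw [if_neg (by omega)]
    rw [e1, e2, e3, e4, e5] at hc
    set u : Fin (L + 1 + 1) → V := fun t => if (t:ℕ) < L + 1 then pad v ↑t
        else φ (fun j : Fin (K+1) => pad v (↑j + 1 + L)) with hudef
    set r : Fin (L + 1 + 1) → ZMod 2 := fun t => if (t:ℕ) < L + 1 then pad p ↑t
        else (∑ j : Fin (K+1), pad p (↑j + 1 + L)) + pφ with hrdef
    have hu : ∀ t, u t ∈ 𝒱 (r t) := by
      intro t
      have ht := t.isLt
      simp only [hudef, hrdef]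
      split_ifs
      · exact hv2 _ (by omega)
      · exact hφ _ _ (fun j => hv2 _ (by have := j.isLt; omega))
    have hc2 := hψcyc u r hu
    have f1 : (fun i : Fin (L+1) => u i.castSucc) = (fun t : Fin (L+1) => pad v ↑t) := by
      funext t; simp only [hudef, Fin.coe_castSucc]; rw [if_pos t.isLt]
    have f2 : u (Fin.last (L+1)) = φ (fun j : Fin (K+1) => pad v (↑j + 1 + L)) := by
      simp only [hudef, Fin.val_last]; rw [if_neg (by omega)]
    have f3 : u 0 = pad v 0 := by
      simp only [hudef, Fin.val_zero]; exact if_pos (by omega)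
    have f4 : r 0 = pad p 0 := by
      simp only [hrdef, Fin.val_zero]; exact if_pos (by omega)
    have f5 : (fun i : Fin (L+1) => u i.succ) = (fun j : Fin (L+1) =>
        if (j:ℕ) < L then pad v (↑j + 1)
        else if (j:ℕ) = L then φ (fun t => pad v (L + ↑t + 1))
        else pad v (↑j + K + 1)) := by
      funext j
      have hj := j.isLt
      simp only [hudef, Fin.val_succ]
      split_ifs <;>
        first
          | rfl
          | omega
          | (congr 1 <;> omega)
          | (congr 1; funext t; congr 1; omega)
    rw [f1, f2, f3, f4, f5] at hc2
    rw [hc, hc2, ← mul_assoc, ← pSign_add]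
    rw [show ∀ (A B C : ZMod 2) (X : k),
        -(pSign k A * (pSign k B * (pSign k C * X))) = pSign k (1 + A + B + C) * X from by
      intro A B C X
      rw [pSign_add, pSign_add, pSign_add, pSign_one']
      ring]
    congr 1
    apply pSign_congr
    have hS2 : (∑ t : Fin (L+1), pad p ↑t)
        = pad p 0 + ∑ j ∈ Finset.range L, pad p (j+1) := by
      rw [Fin.sum_univ_eq_sum_range (fun m => pad p m) (L+1), Finset.sum_range_succ']
      ring
    rw [hS2, sum_ite_lt _ _ (by omega) (fun m => pad p (m+1))]
    push_cast
    linear_combination (-(K : ZMod 2) * (L : ZMod 2)) * h2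
  have claim4 :
      pSign k (pφ * pψ + ((K * L : ℕ) : ZMod 2)) *
        (ip (ψ fun j => if (j:ℕ) = 0 then φ fun t => pad v ↑t else pad v (↑j + K)))
          (pad v (K + 1 + L)) =
        -(pSign k (((K + 1 + L : ℕ) : ZMod 2) + pad p 0 * (pφ + pψ)) *
          (pSign k ((∑ x : Fin (K + 1 + L), if (x:ℕ) < K then pad p (↑x + 1) else 0) * pψ +
                ((K * L : ℕ) : ZMod 2)) *
            (ip (pad v 0))
              (φ fun j => if (j:ℕ) < K then pad v (↑j + 1)
                else if (j:ℕ) = K then ψ fun t => pad v (K + ↑t + 1)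
                else pad v (↑j + L + 1)))) := by
    set w : Fin (L + 1 + 1) → V := fun j => if (j:ℕ) = 0 then φ (fun t : Fin (K+1) => pad v ↑t)
        else pad v (↑j + K) with hwdef
    set q : Fin (L + 1 + 1) → ZMod 2 := fun j => if (j:ℕ) = 0 then (∑ t : Fin (K+1), pad p ↑t) + pφ
        else pad p (↑j + K) with hqdef
    have hw : ∀ j, w j ∈ 𝒱 (q j) := by
      intro j
      have hj := j.isLt
      simp only [hwdef, hqdef]
      split_ifs
      · exact hφ _ _ (fun t => hv2 _ (by have := t.isLt; omega))
      · exact hv2 _ (by omega)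
    have hc := hψcyc w q hw
    have e1 : (fun i : Fin (L+1) => w i.castSucc) = (fun j : Fin (L+1) =>
        if (j:ℕ) = 0 then φ (fun t => pad v ↑t) else pad v (↑j + K)) := by
      funext j; simp only [hwdef, Fin.coe_castSucc]
    have e2 : w (Fin.last (L+1)) = pad v (K + 1 + L) := by
      simp only [hwdef, Fin.val_last]; rw [if_neg (by omega)]
      congr 1
      omega
    have e3 : w 0 = φ (fun t => pad v ↑t) := by
      simp [hwdef]
    have e4 : q 0 = (∑ t : Fin (K+1), pad p ↑t) + pφ := by
      simp [hqdef]
    have e5 : (fun i : Fin (L+1) => w i.succ) = (fun j : Fin (L+1) => pad v (↑j + 1 + K)) := by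
      funext j; simp only [hwdef, Fin.val_succ]; rw [if_neg (by omega)]
    rw [e1, e2, e3, e4, e5] at hc
    set u : Fin (K + 1 + 1) → V := fun t => if (t:ℕ) < K + 1 then pad v ↑t
        else ψ (fun j : Fin (L+1) => pad v (↑j + 1 + K)) with hudef
    set r : Fin (K + 1 + 1) → ZMod 2 := fun t => if (t:ℕ) < K + 1 then pad p ↑t
        else (∑ j : Fin (L+1), pad p (↑j + 1 + K)) + pψ with hrdef
    have hu : ∀ t, u t ∈ 𝒱 (r t) := by
      intro t
      have ht := t.isLt
      simp only [hudef, hrdef]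
      split_ifs
      · exact hv2 _ (by omega)
      · exact hψ _ _ (fun j => hv2 _ (by have := j.isLt; omega))
    have hc2 := hφcyc u r hu
    have f1 : (fun i : Fin (K+1) => u i.castSucc) = (fun t : Fin (K+1) => pad v ↑t) := by
      funext t; simp only [hudef, Fin.coe_castSucc]; rw [if_pos t.isLt]
    have f2 : u (Fin.last (K+1)) = ψ (fun j : Fin (L+1) => pad v (↑j + 1 + K)) := by
      simp only [hudef, Fin.val_last]; rw [if_neg (by omega)]
    have f3 : u 0 = pad v 0 := by
      simp only [hudef, Fin.val_zero]; exact if_pos (by omega)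
    have f4 : r 0 = pad p 0 := by
      simp only [hrdef, Fin.val_zero]; exact if_pos (by omega)
    have f5 : (fun i : Fin (K+1) => u i.succ) = (fun j : Fin (K+1) =>
        if (j:ℕ) < K then pad v (↑j + 1)
        else if (j:ℕ) = K then ψ (fun t => pad v (K + ↑t + 1))
        else pad v (↑j + L + 1)) := by
      funext j
      have hj := j.isLt
      simp only [hudef, Fin.val_succ]
      split_ifs <;>
        first
          | rfl
          | omega
          | (congr 1 <;> omega)
          | (congr 1; funext t; congr 1; omega)
    rw [f1, f2, f3, f4, f5] at hc2
    rw [hc, hc2, ← mul_assoc, ← mul_assoc, ← pSign_add, ← pSign_add]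
    rw [show ∀ (A B : ZMod 2) (X : k),
        -(pSign k A * (pSign k B * X)) = pSign k (1 + A + B) * X from by
      intro A B X
      rw [pSign_add, pSign_add, pSign_one']
      ring]
    congr 1
    apply pSign_congr
    have hS2 : (∑ t : Fin (K+1), pad p ↑t)
        = pad p 0 + ∑ j ∈ Finset.range K, pad p (j+1) := by
      rw [Fin.sum_univ_eq_sum_range (fun m => pad p m) (K+1), Finset.sum_range_succ']
      ring
    rw [hS2, sum_ite_lt _ _ (by omega) (fun m => pad p (m+1))]
    push_cast
    linear_combination (pφ * pψ) * h2
  have hsum1 : (∑ x : Fin K,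
      pSign k ((∑ x_1 : Fin (K + 1 + L), if (x_1:ℕ) < (x:ℕ) + 1 then pad p ↑x_1 else 0) * pψ +
            ((((x:ℕ) + 1) * L : ℕ) : ZMod 2)) *
          (ip (φ fun j => if (j:ℕ) < (x:ℕ) + 1 then pad v ↑j
              else if (j:ℕ) = (x:ℕ) + 1 then ψ fun t => pad v ((x:ℕ) + 1 + ↑t)
              else pad v (↑j + L)))
            (pad v (K + 1 + L))) =
      pSign k (((K + 1 + L : ℕ) : ZMod 2) + pad p 0 * (pφ + pψ)) *
        ∑ x : Fin K,
          pSign k ((∑ x_1 : Fin (K + 1 + L), if (x_1:ℕ) < (x:ℕ) then pad p (↑x_1 + 1) else 0) * pψ +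
                (((x:ℕ) * L : ℕ) : ZMod 2)) *
            (ip (pad v 0))
              (φ fun j => if (j:ℕ) < (x:ℕ) then pad v (↑j + 1)
                else if (j:ℕ) = (x:ℕ) then ψ fun t => pad v ((x:ℕ) + ↑t + 1)
                else pad v (↑j + L + 1)) := by
    rw [Finset.mul_sum]
    exact Finset.sum_congr rfl (fun x _ => claim1 x)
  have hsum2 : (∑ x : Fin L,
      pSign k ((∑ x_1 : Fin (L + 1 + K), if (x_1:ℕ) < (x:ℕ) + 1 then pad p ↑x_1 else 0) * pφ +
            ((((x:ℕ) + 1) * K : ℕ) : ZMod 2)) *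
          (ip (ψ fun j => if (j:ℕ) < (x:ℕ) + 1 then pad v ↑j
              else if (j:ℕ) = (x:ℕ) + 1 then φ fun t => pad v ((x:ℕ) + 1 + ↑t)
              else pad v (↑j + K)))
            (pad v (K + 1 + L))) =
      pSign k (((K + 1 + L : ℕ) : ZMod 2) + pad p 0 * (pφ + pψ)) *
        ∑ x : Fin L,
          pSign k ((∑ x_1 : Fin (L + 1 + K), if (x_1:ℕ) < (x:ℕ) then pad p (↑x_1 + 1) else 0) * pφ +
                (((x:ℕ) * K : ℕ) : ZMod 2)) *
            (ip (pad v 0))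
              (ψ fun j => if (j:ℕ) < (x:ℕ) then pad v (↑j + 1)
                else if (j:ℕ) = (x:ℕ) then φ fun t => pad v ((x:ℕ) + ↑t + 1)
                else pad v (↑j + K + 1)) := by
    rw [Finset.mul_sum]
    exact Finset.sum_congr rfl (fun x _ => claim3 x)
  linear_combination claim2 + hsum1 - claim4 - pSign k (pφ * pψ + ((K * L : ℕ) : ZMod 2)) * hsum2
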